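/- Partition function of the two-matrix eigenvalue measure as a product of biorthogonality norms: if (π_j)_{0≤j≤N−1} and (σ_j)_{0≤j≤N−1} are monic polynomials with deg π_j = deg σ_j = j and there are complex numbers h_j with ∫∫_{ℝ²} π_j(x)·σ_k(y)·w(x,y) dx dy = h_j·δ_{jk} for all j,k ≤ N−1, then ∫_{ℝ^N×ℝ^N} Δ(x)·Δ(y)·∏_{i=1}^{N} w(x_i,y_i) dx dy = N! · ∏_{j=0}^{N−1} h_j. -/

import Mathlib

open MeasureTheory

/-- Vandermonde product `Δ(x) = ∏_{i<j} (x_j - x_i)`. -/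
noncomputable def vand {n : ℕ} (x : Fin n → ℝ) : ℝ :=
  ∏ i : Fin n, ∏ j ∈ Finset.Ioi i, (x j - x i)

/-- The two-matrix model weight `w(x,y) = exp(-(N/T)(V₁(x)+V₂(y)-xy))`. -/
noncomputable def tmWeight (N : ℕ) (T : ℝ) (V₁ V₂ : Polynomial ℝ) (x y : ℝ) : ℝ :=
  Real.exp (-((N : ℝ) / T) * (V₁.eval x + V₂.eval y - x * y))

lemma integrable_abs_pow_mul_exp {b : ℝ} (hb : 0 < b) (n : ℕ) :
    Integrable fun x : ℝ => |x| ^ n * Real.exp (-b * x ^ 2) := by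
  have h : Integrable fun x : ℝ => x ^ n * Real.exp (-b * x ^ 2) := by
    have := integrable_rpow_mul_exp_neg_mul_sq hb (s := (n : ℝ)) (by exact_mod_cast neg_one_lt_zero.trans_le (Nat.cast_nonneg n))
    simpa [Real.rpow_natCast] using this
  refine h.abs.congr (Filter.Eventually.of_forall fun x => ?_)
  simp only [abs_mul, abs_pow, Real.abs_exp]

lemma integrable_norm_poly_mul_exp (P : Polynomial ℂ) {b : ℝ} (hb : 0 < b) :
    Integrable fun x : ℝ => ‖P.eval (x : ℂ)‖ * Real.exp (-b * x ^ 2) := by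
  have hi : Integrable (fun x : ℝ => ∑ i ∈ Finset.range (P.natDegree + 1),
      ‖P.coeff i‖ * (|x| ^ i * Real.exp (-b * x ^ 2))) :=
    integrable_finset_sum _ fun i _ => (integrable_abs_pow_mul_exp hb i).const_mul _
  refine hi.mono' ?_ (Filter.Eventually.of_forall fun x => ?_)
  · exact (((P.continuous_aeval).comp Complex.continuous_ofReal).norm.mul
      (Real.continuous_exp.comp (by continuity))).aestronglyMeasurable
  · rw [Real.norm_of_nonneg (by positivity)]
    have hbnd : ‖P.eval (x : ℂ)‖ ≤ ∑ i ∈ Finset.range (P.natDegree + 1), ‖P.coeff i‖ * |x| ^ i := by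
      rw [Polynomial.eval_eq_sum_range]
      refine (norm_sum_le _ _).trans (le_of_eq (Finset.sum_congr rfl fun i _ => ?_))
      rw [norm_mul, norm_pow, Complex.norm_real, Real.norm_eq_abs]
    calc ‖P.eval (x : ℂ)‖ * Real.exp (-b * x ^ 2)
        ≤ (∑ i ∈ Finset.range (P.natDegree + 1), ‖P.coeff i‖ * |x| ^ i) * Real.exp (-b * x ^ 2) :=
          mul_le_mul_of_nonneg_right hbnd (Real.exp_pos _).le
      _ = _ := by rw [Finset.sum_mul]; exact Finset.sum_congr rfl fun i _ => by ring

lemma integrable_tm (N : ℕ) (hN : 1 ≤ N) (T : ℝ) (hT : 0 < T) (V₁ V₂ : Polynomial ℝ)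
    (hconf : ∃ c > (0 : ℝ), ∃ C : ℝ, ∀ x y : ℝ,
      c * (x ^ 2 + y ^ 2) - C ≤ V₁.eval x + V₂.eval y - x * y)
    (P Q : Polynomial ℂ) :
    Integrable fun p : ℝ × ℝ =>
      P.eval (p.1 : ℂ) * Q.eval (p.2 : ℂ) * (tmWeight N T V₁ V₂ p.1 p.2 : ℂ) := by
  obtain ⟨c, hc, C, hC⟩ := hconf
  set a : ℝ := (N : ℝ) / T with ha
  have ha0 : 0 < a := div_pos (by exact_mod_cast Nat.lt_of_lt_of_le Nat.zero_lt_one hN) hT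
  have hac : 0 < a * c := mul_pos ha0 hc
  have hKint : Integrable fun p : ℝ × ℝ =>
      (Real.exp (a * C) * (‖P.eval (p.1 : ℂ)‖ * Real.exp (-(a * c) * p.1 ^ 2))) *
      (‖Q.eval (p.2 : ℂ)‖ * Real.exp (-(a * c) * p.2 ^ 2)) :=
    ((integrable_norm_poly_mul_exp P hac).const_mul _).mul_prod
      (integrable_norm_poly_mul_exp Q hac)
  refine hKint.mono' ?_ (Filter.Eventually.of_forall fun p => ?_)
  · apply Continuous.aestronglyMeasurable
    apply Continuous.mul
    · exact ((P.continuous_aeval).comp (Complex.continuous_ofReal.comp continuous_fst)).mul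
        ((Q.continuous_aeval).comp (Complex.continuous_ofReal.comp continuous_snd))
    · exact Complex.continuous_ofReal.comp (Real.continuous_exp.comp (by
        apply Continuous.mul
        · exact continuous_const
        · exact ((V₁.continuous_aeval.comp continuous_fst).add
            (V₂.continuous_aeval.comp continuous_snd)).sub (continuous_fst.mul continuous_snd)))
  · have hw : tmWeight N T V₁ V₂ p.1 p.2
        ≤ Real.exp (a * C) * (Real.exp (-(a * c) * p.1 ^ 2) * Real.exp (-(a * c) * p.2 ^ 2)) := by
      rw [tmWeight, ← Real.exp_add, ← Real.exp_add]
      apply Real.exp_le_exp.mpr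
      nlinarith [mul_le_mul_of_nonneg_left (hC p.1 p.2) ha0.le]
    have h0 : (0:ℝ) ≤ tmWeight N T V₁ V₂ p.1 p.2 := (Real.exp_pos _).le
    rw [norm_mul, norm_mul, Complex.norm_real, Real.norm_of_nonneg h0]
    calc ‖P.eval (p.1 : ℂ)‖ * ‖Q.eval (p.2 : ℂ)‖ * tmWeight N T V₁ V₂ p.1 p.2
        ≤ ‖P.eval (p.1 : ℂ)‖ * ‖Q.eval (p.2 : ℂ)‖ *
          (Real.exp (a * C) * (Real.exp (-(a * c) * p.1 ^ 2) * Real.exp (-(a * c) * p.2 ^ 2))) :=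
          mul_le_mul_of_nonneg_left hw (by positivity)
      _ = _ := by ring

set_option maxHeartbeats 2000000 in
theorem partition_function_eq_product_of_norms
    (N : ℕ) (hN : 1 ≤ N) (T : ℝ) (hT : 0 < T) (V₁ V₂ : Polynomial ℝ)
    (hconf : ∃ c > (0 : ℝ), ∃ C : ℝ, ∀ x y : ℝ,
      c * (x ^ 2 + y ^ 2) - C ≤ V₁.eval x + V₂.eval y - x * y)
    (π σ : Fin N → Polynomial ℂ) (h : Fin N → ℂ)
    (hπ : ∀ j : Fin N, (π j).Monic ∧ (π j).natDegree = (j : ℕ))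
    (hσ : ∀ j : Fin N, (σ j).Monic ∧ (σ j).natDegree = (j : ℕ))
    (horth : ∀ j k : Fin N,
      (∫ p : ℝ × ℝ, (π j).eval (p.1 : ℂ) * (σ k).eval (p.2 : ℂ) *
        (tmWeight N T V₁ V₂ p.1 p.2 : ℂ))
        = if j = k then h j else 0) :
    ((∫ p : (Fin N → ℝ) × (Fin N → ℝ),
        vand p.1 * vand p.2 * ∏ i, tmWeight N T V₁ V₂ (p.1 i) (p.2 i) : ℝ) : ℂ)
      = (N.factorial : ℂ) * ∏ j : Fin N, h j := by
  classical
  set F : Fin N → Fin N → ℝ × ℝ → ℂ := fun j k p =>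
    (π j).eval (p.1 : ℂ) * (σ k).eval (p.2 : ℂ) * (tmWeight N T V₁ V₂ p.1 p.2 : ℂ) with hF
  have hFint : ∀ j k, Integrable (F j k) := fun j k =>
    integrable_tm N hN T hT V₁ V₂ hconf (π j) (σ k)
  set ε : Equiv.Perm (Fin N) → ℂ := fun τ => ((Equiv.Perm.sign τ : ℤ) : ℂ) with hε
  -- pointwise determinant expansion
  have key : ∀ x y : Fin N → ℝ,
      ((vand x : ℝ) : ℂ) * ((vand y : ℝ) : ℂ) * ∏ i, (tmWeight N T V₁ V₂ (x i) (y i) : ℂ)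
      = ∑ τ : Equiv.Perm (Fin N), ∑ ρ : Equiv.Perm (Fin N),
          (ε τ * ε ρ) * ∏ i, F (τ⁻¹ i) (ρ⁻¹ i) (x i, y i) := by
    intro x y
    have hx : ((vand x : ℝ) : ℂ) =
        (Matrix.of fun i j => (π j).eval ((x i : ℝ) : ℂ)).det := by
      rw [← Matrix.det_eval_matrixOfPolynomials_eq_det_vandermonde (fun i => ((x i : ℝ) : ℂ)) π
        (fun j => (hπ j).2) (fun j => (hπ j).1), Matrix.det_vandermonde]
      simp only [vand]
      push_cast
      rfl
    have hy : ((vand y : ℝ) : ℂ) =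
        (Matrix.of fun i j => (σ j).eval ((y i : ℝ) : ℂ)).det := by
      rw [← Matrix.det_eval_matrixOfPolynomials_eq_det_vandermonde (fun i => ((y i : ℝ) : ℂ)) σ
        (fun j => (hσ j).2) (fun j => (hσ j).1), Matrix.det_vandermonde]
      simp only [vand]
      push_cast
      rfl
    rw [hx, hy, Matrix.det_apply', Matrix.det_apply', Finset.sum_mul_sum, Finset.sum_mul]
    refine Finset.sum_congr rfl fun τ _ => ?_
    rw [Finset.sum_mul]
    refine Finset.sum_congr rfl fun ρ _ => ?_
    have r1 : ∏ i, (π i).eval ((x (τ i) : ℝ) : ℂ) = ∏ i, (π (τ⁻¹ i)).eval ((x i : ℝ) : ℂ) := by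
      have := Equiv.prod_comp τ (fun i => (π (τ⁻¹ i)).eval ((x i : ℝ) : ℂ))
      simpa using this
    have r2 : ∏ i, (σ i).eval ((y (ρ i) : ℝ) : ℂ) = ∏ i, (σ (ρ⁻¹ i)).eval ((y i : ℝ) : ℂ) := by
      have := Equiv.prod_comp ρ (fun i => (σ (ρ⁻¹ i)).eval ((y i : ℝ) : ℂ))
      simpa using this
    simp only [Matrix.of_apply]
    rw [r1, r2]
    calc (ε τ * ∏ i, (π (τ⁻¹ i)).eval ((x i : ℝ) : ℂ)) *
          (ε ρ * ∏ i, (σ (ρ⁻¹ i)).eval ((y i : ℝ) : ℂ)) *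
          ∏ i, (tmWeight N T V₁ V₂ (x i) (y i) : ℂ)
        = (ε τ * ε ρ) * ((∏ i, (π (τ⁻¹ i)).eval ((x i : ℝ) : ℂ)) *
            (∏ i, (σ (ρ⁻¹ i)).eval ((y i : ℝ) : ℂ)) *
            ∏ i, (tmWeight N T V₁ V₂ (x i) (y i) : ℂ)) := by ring
      _ = (ε τ * ε ρ) * ∏ i, F (τ⁻¹ i) (ρ⁻¹ i) (x i, y i) := by
          rw [← Finset.prod_mul_distrib, ← Finset.prod_mul_distrib]
  -- the measurable equivalence
  set e := MeasurableEquiv.arrowProdEquivProdArrow ℝ ℝ (Fin N) with he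
  have hmp : MeasurePreserving e (Measure.pi fun _ => ((volume : Measure ℝ).prod volume))
      ((Measure.pi fun _ : Fin N => (volume : Measure ℝ)).prod
        (Measure.pi fun _ : Fin N => (volume : Measure ℝ))) :=
    measurePreserving_arrowProdEquivProdArrow ℝ ℝ (Fin N) (fun _ => volume) (fun _ => volume)
  calc ((∫ p : (Fin N → ℝ) × (Fin N → ℝ),
        vand p.1 * vand p.2 * ∏ i, tmWeight N T V₁ V₂ (p.1 i) (p.2 i) : ℝ) : ℂ)
      = ∫ p : (Fin N → ℝ) × (Fin N → ℝ),
          ((vand p.1 * vand p.2 * ∏ i, tmWeight N T V₁ V₂ (p.1 i) (p.2 i) : ℝ) : ℂ) :=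
        (integral_ofReal).symm
    _ = ∫ q : Fin N → ℝ × ℝ,
          ((vand (e q).1 * vand (e q).2 *
            ∏ i, tmWeight N T V₁ V₂ ((e q).1 i) ((e q).2 i) : ℝ) : ℂ) :=
        (hmp.integral_comp (MeasurableEquiv.measurableEmbedding e) _).symm
    _ = ∫ q : Fin N → ℝ × ℝ, ∑ τ : Equiv.Perm (Fin N), ∑ ρ : Equiv.Perm (Fin N),
          (ε τ * ε ρ) * ∏ i, F (τ⁻¹ i) (ρ⁻¹ i) (q i) := by
        refine integral_congr_ae (Filter.Eventually.of_forall fun q => ?_)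
        have hq1 : (e q).1 = fun i => (q i).1 := rfl
        have hq2 : (e q).2 = fun i => (q i).2 := rfl
        beta_reduce
        rw [hq1, hq2]
        push_cast
        simpa using key (fun i => (q i).1) (fun i => (q i).2)
    _ = ∑ τ : Equiv.Perm (Fin N), ∑ ρ : Equiv.Perm (Fin N),
          ∫ q : Fin N → ℝ × ℝ, (ε τ * ε ρ) * ∏ i, F (τ⁻¹ i) (ρ⁻¹ i) (q i) := by
        rw [integral_finset_sum _ fun τ _ => integrable_finset_sum _ fun ρ _ =>
          ((Integrable.fintype_prod fun i => hFint (τ⁻¹ i) (ρ⁻¹ i)).const_mul _)]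
        exact Finset.sum_congr rfl fun τ _ => integral_finset_sum _ fun ρ _ =>
          ((Integrable.fintype_prod fun i => hFint (τ⁻¹ i) (ρ⁻¹ i)).const_mul _)
    _ = ∑ τ : Equiv.Perm (Fin N), ∑ ρ : Equiv.Perm (Fin N),
          (ε τ * ε ρ) * ∏ i, (if τ⁻¹ i = ρ⁻¹ i then h (τ⁻¹ i) else 0) := by
        refine Finset.sum_congr rfl fun τ _ => Finset.sum_congr rfl fun ρ _ => ?_
        rw [integral_const_mul, integral_fintype_prod_volume_eq_prod
          (f := fun i => F (τ⁻¹ i) (ρ⁻¹ i))]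
        congr 1
        exact Finset.prod_congr rfl fun i _ => horth (τ⁻¹ i) (ρ⁻¹ i)
    _ = ∑ τ : Equiv.Perm (Fin N), ∏ j : Fin N, h j := by
        refine Finset.sum_congr rfl fun τ _ => ?_
        rw [Finset.sum_eq_single τ]
        · have hs : ε τ * ε τ = 1 := by
            rcases Int.units_eq_one_or (Equiv.Perm.sign τ) with hs | hs <;>
              simp [hε, hs]
          simp only [eq_self_iff_true, if_true]
          rw [hs, one_mul]
          exact Equiv.prod_comp τ⁻¹ h
        · intro ρ _ hρ
          have : ∃ i, τ⁻¹ i ≠ ρ⁻¹ i := by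
            by_contra hcon
            push_neg at hcon
            exact hρ (inv_injective (Equiv.ext hcon)).symm
          obtain ⟨i, hi⟩ := this
          have hz : (∏ i : Fin N, if τ⁻¹ i = ρ⁻¹ i then h (τ⁻¹ i) else 0) = 0 :=
            Finset.prod_eq_zero (Finset.mem_univ i) (if_neg hi)
          rw [hz, mul_zero]
        · intro hτ; exact absurd (Finset.mem_univ τ) hτ
    _ = (N.factorial : ℂ) * ∏ j : Fin N, h j := by
        rw [Finset.sum_const, Finset.card_univ, Fintype.card_perm, Fintype.card_fin,
          nsmul_eq_mul]
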